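/- arXiv:1706.02939 — 8 statements merged into one kernel-verified Lean document; each statement's English description precedes it below -/
import Mathlib

section
/- Let O be a nonempty set of obstacles in ℝ² and let γ : [0,1] → ℝ² be a continuously differentiable path such that clr(γ(t)) > 0 for all t ∈ [0,1]. If clr(γ(0)) ≤ clr(γ(1)), then the cost of γ satisfies μ(γ) = ∫₀¹ ‖γ'(t)‖ / clr(γ(t)) dt ≥ log( clr(γ(1)) / clr(γ(0)) ). -/
open Real Set Metric

/-- Lemma 2.1(i): the cost of any C¹ path is at least the log of the
clearance ratio of its endpoints. -/
theorem cost_ge_log_clearance_ratio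
    (O : Set (EuclideanSpace ℝ (Fin 2))) (hO : O.Nonempty)
    (γ : ℝ → EuclideanSpace ℝ (Fin 2))
    (hγ : ContDiffOn ℝ 1 γ (Icc 0 1))
    (hclr : ∀ t ∈ Icc (0:ℝ) 1, 0 < infDist (γ t) O)
    (hends : infDist (γ 0) O ≤ infDist (γ 1) O) :
    Real.log (infDist (γ 1) O / infDist (γ 0) O) ≤
      ∫ t in (0:ℝ)..1, ‖derivWithin γ (Icc 0 1) t‖ / infDist (γ t) O := by
  set d : ℝ → ℝ := fun t => infDist (γ t) O with hd
  set g : ℝ → ℝ := fun u => ‖derivWithin γ (Icc 0 1) u‖ / d u with hgdef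
  have hγc : ContinuousOn γ (Icc 0 1) := hγ.continuousOn
  have hdc : ContinuousOn d (Icc 0 1) :=
    (continuous_infDist_pt O).comp_continuousOn hγc
  have hdpos : ∀ t ∈ Icc (0:ℝ) 1, 0 < d t := hclr
  have hdne : ∀ t ∈ Icc (0:ℝ) 1, d t ≠ 0 := fun t ht => (hclr t ht).ne'
  have hgc : ContinuousOn g (Icc 0 1) :=
    ((hγ.continuousOn_derivWithin (uniqueDiffOn_Icc one_pos) le_rfl).norm).div hdc hdne
  have hgint : MeasureTheory.IntegrableOn g (uIcc (0:ℝ) 1) := by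
    rw [uIcc_of_le zero_le_one]
    exact hgc.integrableOn_compact isCompact_Icc
  -- f = log ∘ d
  set f : ℝ → ℝ := fun t => Real.log (d t) with hf
  have hfc : ContinuousOn f (Icc 0 1) := hdc.log hdne
  set B : ℝ → ℝ := fun t => Real.log (d 0) + ∫ u in (0:ℝ)..t, g u with hB
  have hBc : ContinuousOn B (Icc 0 1) := by
    apply continuousOn_const.add
    have := intervalIntegral.continuousOn_primitive_interval (a := (0:ℝ)) (b := 1) hgint
    rwa [uIcc_of_le zero_le_one] at this
  have hB' : ∀ x ∈ Ico (0:ℝ) 1, HasDerivWithinAt B (g x) (Ici x) x := by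
    intro x hx
    have hxI : x ∈ Icc (0:ℝ) 1 := Ico_subset_Icc_self hx
    have hmem : Icc (0:ℝ) 1 ∈ nhdsWithin x (Ioi x) := Icc_mem_nhdsGT_of_mem hx
    have hmeas : StronglyMeasurableAtFilter g (nhdsWithin x (Ioi x)) :=
      ⟨Icc 0 1, hmem, hgc.aestronglyMeasurable measurableSet_Icc⟩
    have hint : IntervalIntegrable g MeasureTheory.volume 0 x := by
      apply (hgint.mono_set ?_).intervalIntegrable
      rw [uIcc_of_le zero_le_one, uIcc_of_le hx.1]
      exact Icc_subset_Icc le_rfl hx.2.le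
    have hcw : ContinuousWithinAt g (Ioi x) x :=
      (hgc x hxI).mono_of_mem_nhdsWithin hmem
    exact (intervalIntegral.integral_hasDerivWithinAt_right hint hmeas hcw).const_add _
  -- the slope bound
  have bound : ∀ x ∈ Ico (0:ℝ) 1, ∀ r, g x < r →
      ∃ᶠ z in nhdsWithin x (Ioi x), slope f x z < r := by
    intro x hx r hr
    have hxI : x ∈ Icc (0:ℝ) 1 := Ico_subset_Icc_self hx
    have hmem : Icc (0:ℝ) 1 ∈ nhdsWithin x (Ioi x) := Icc_mem_nhdsGT_of_mem hx
    -- γ has derivative within Ioi x at x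
    have hder : HasDerivWithinAt γ (derivWithin γ (Icc 0 1) x) (Ioi x) x :=
      ((hγ.differentiableOn one_ne_zero x hxI).hasDerivWithinAt).mono_of_mem_nhdsWithin hmem
    have hslope : Filter.Tendsto (fun z => ‖slope γ x z‖) (nhdsWithin x (Ioi x))
        (nhds ‖derivWithin γ (Icc 0 1) x‖) := by
      have := (hasDerivWithinAt_iff_tendsto_slope' (s := Ioi x)
        (fun h => lt_irrefl x h)).1 hder
      exact this.norm
    have htend : Filter.Tendsto (fun z => ‖slope γ x z‖ / d x) (nhdsWithin x (Ioi x))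
        (nhds (g x)) := hslope.div_const _
    have hev : ∀ᶠ z in nhdsWithin x (Ioi x), ‖slope γ x z‖ / d x < r :=
      htend (IsOpen.mem_nhds isOpen_Iio hr)
    apply Filter.Eventually.frequently
    filter_upwards [hev, hmem, self_mem_nhdsWithin] with z hz hzI hzgt
    refine lt_of_le_of_lt ?_ hz
    -- slope f x z ≤ ‖slope γ x z‖ / d x
    have hzx : (0:ℝ) < z - x := sub_pos.2 hzgt
    have hdx : 0 < d x := hdpos x hxI
    have hdz : 0 < d z := hdpos z hzI
    have hlog : f z - f x ≤ (d z - d x) / d x := by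
      have h1 : Real.log (d z) - Real.log (d x) = Real.log (d z / d x) := by
        rw [Real.log_div hdz.ne' hdx.ne']
      have h2 : Real.log (d z / d x) ≤ d z / d x - 1 :=
        Real.log_le_sub_one_of_pos (div_pos hdz hdx)
      simp only [hf]
      rw [h1]
      refine h2.trans (le_of_eq ?_)
      rw [sub_div, div_self hdx.ne']
    have hdd : d z - d x ≤ ‖γ z - γ x‖ := by
      have := Metric.infDist_le_infDist_add_dist (x := γ z) (y := γ x) (s := O)
      rw [dist_eq_norm] at this
      linarith
    have hsl : slope f x z ≤ (‖γ z - γ x‖ / d x) / (z - x) := by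
      rw [slope_def_field, div_div]
      rw [div_le_div_iff₀ hzx (by positivity)]
      calc (f z - f x) * (d x * (z - x)) ≤ ((d z - d x) / d x) * (d x * (z - x)) := by
            apply mul_le_mul_of_nonneg_right hlog (by positivity)
        _ = (d z - d x) * (z - x) := by field_simp
        _ ≤ ‖γ z - γ x‖ * (z - x) := mul_le_mul_of_nonneg_right hdd hzx.le
    refine hsl.trans (le_of_eq ?_)
    have hns : ‖slope γ x z‖ = ‖γ z - γ x‖ / (z - x) := by
      rw [slope_def_module, norm_smul, norm_inv, Real.norm_eq_abs, abs_of_pos hzx,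
        inv_mul_eq_div]
    rw [hns, div_div, div_div, mul_comm]
  have key : ∀ ⦃x⦄, x ∈ Icc (0:ℝ) 1 → f x ≤ B x := by
    apply image_le_of_liminf_slope_right_le_deriv_boundary hfc ?_ hBc hB' bound
    simp [hB, hf, intervalIntegral.integral_same]
  have h1 : f 1 ≤ B 1 := key (right_mem_Icc.2 zero_le_one)
  have hd0 : 0 < d 0 := hdpos 0 (left_mem_Icc.2 zero_le_one)
  have hd1 : 0 < d 1 := hdpos 1 (right_mem_Icc.2 zero_le_one)
  rw [Real.log_div hd1.ne' hd0.ne']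
  simp only [hf, hB] at h1
  linarith
end

section
/- Let O be a nonempty set of obstacles in ℝ² and let γ : [0,1] → ℝ² be a continuously differentiable path such that clr(γ(t)) > 0 for all t ∈ [0,1], with total cost d = μ(γ) = ∫₀¹ ‖γ'(t)‖ / clr(γ(t)) dt. Then for every t₀ ∈ [0,1], clr(γ(0)) · exp(−d) ≤ clr(γ(t₀)) ≤ clr(γ(0)) · exp(d). -/
open Real Set Metric

/-- Key claim in Lemma 4.3: every point of a path of total cost `d` has clearance
within a factor `exp d` of the clearance of the starting point. -/
theorem clearance_bounds_along_path
    (O : Set (EuclideanSpace ℝ (Fin 2))) (hO : O.Nonempty)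
    (γ : ℝ → EuclideanSpace ℝ (Fin 2))
    (hγ : ContDiffOn ℝ 1 γ (Icc 0 1))
    (hclr : ∀ t ∈ Icc (0:ℝ) 1, 0 < infDist (γ t) O)
    (d : ℝ)
    (hd : d = ∫ t in (0:ℝ)..1, ‖derivWithin γ (Icc 0 1) t‖ / infDist (γ t) O)
    (t₀ : ℝ) (ht₀ : t₀ ∈ Icc (0:ℝ) 1) :
    infDist (γ 0) O * Real.exp (-d) ≤ infDist (γ t₀) O ∧
      infDist (γ t₀) O ≤ infDist (γ 0) O * Real.exp d := by
  set ρ : ℝ → ℝ := fun t => infDist (γ t) O with hρdef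
  have h01 : (0:ℝ) ≤ 1 := zero_le_one
  have hmem0 : (0:ℝ) ∈ Icc (0:ℝ) 1 := by constructor <;> norm_num
  have hρc : ContinuousOn ρ (Icc 0 1) :=
    (continuous_infDist_pt O).comp_continuousOn hγ.continuousOn
  set c : ℝ → ℝ := fun t => ‖derivWithin γ (Icc 0 1) t‖ / ρ t with hcdef
  have hcc : ContinuousOn c (Icc 0 1) := by
    apply ContinuousOn.div
    · exact (hγ.continuousOn_derivWithin (uniqueDiffOn_Icc one_pos) le_rfl).norm
    · exact hρc
    · intro t ht; exact (hclr t ht).ne'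
  -- extend `c` continuously to all of ℝ
  set cp : ℝ → ℝ := fun t => c ((projIcc 0 1 h01 t) : ℝ) with hcpdef
  have hcpcont : Continuous cp :=
    hcc.comp_continuous (continuous_subtype_val.comp continuous_projIcc)
      fun x => (projIcc 0 1 h01 x).2
  have hcp_eq : ∀ t ∈ Icc (0:ℝ) 1, cp t = c t := by
    intro t ht; simp [hcpdef, projIcc_of_mem h01 ht]
  have hcp_nonneg : ∀ t, 0 ≤ cp t := by
    intro t
    exact div_nonneg (norm_nonneg _) (hclr _ (projIcc 0 1 h01 t).2).le
  set B : ℝ → ℝ := fun t => ∫ s in (0:ℝ)..t, cp s with hBdef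
  have hB' : ∀ x, HasDerivAt B (cp x) x := fun x =>
    (hcpcont.integral_hasStrictDerivAt 0 x).hasDerivAt
  -- the key slope estimate machinery
  have htend : ∀ x ∈ Ico (0:ℝ) 1,
      Filter.Tendsto (fun z => ‖γ z - γ x‖ / (z - x)) (nhdsWithin x (Ioi x))
        (nhds ‖derivWithin γ (Icc 0 1) x‖) := by
    intro x hx
    have hxI : x ∈ Icc (0:ℝ) 1 := ⟨hx.1, hx.2.le⟩
    have hder : HasDerivWithinAt γ (derivWithin γ (Icc 0 1) x) (Icc 0 1) x :=
      ((hγ.differentiableOn one_ne_zero) x hxI).hasDerivWithinAt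
    have hslope := hasDerivWithinAt_iff_tendsto_slope.1 hder
    have hle : nhdsWithin x (Ioi x) ≤ nhdsWithin x (Icc 0 1 \ {x}) := by
      refine le_trans (nhdsWithin_le_of_mem (Ioc_mem_nhdsGT_of_mem ⟨le_rfl, hx.2⟩)) ?_
      apply nhdsWithin_mono
      intro z hz
      exact ⟨⟨hx.1.trans hz.1.le, hz.2⟩, by simpa using hz.1.ne'⟩
    have h1 : Filter.Tendsto (slope γ x) (nhdsWithin x (Ioi x))
        (nhds (derivWithin γ (Icc 0 1) x)) := hslope.mono_left hle
    have h2 := h1.norm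
    refine h2.congr' ?_
    filter_upwards [self_mem_nhdsWithin] with z hz
    have hzx : (0:ℝ) < z - x := sub_pos.2 hz
    rw [slope_def_module, norm_smul, norm_inv, Real.norm_eq_abs, abs_of_pos hzx,
      inv_mul_eq_div]
  have hρ_tend : ∀ x ∈ Ico (0:ℝ) 1,
      Filter.Tendsto ρ (nhdsWithin x (Ioi x)) (nhds (ρ x)) := by
    intro x hx
    have hxI : x ∈ Icc (0:ℝ) 1 := ⟨hx.1, hx.2.le⟩
    exact (hρc x hxI).mono_left
      ((nhdsWithin_le_of_mem (Ioc_mem_nhdsGT_of_mem ⟨le_rfl, hx.2⟩)).trans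
        (nhdsWithin_mono _ fun z hz => ⟨hx.1.trans hz.1.le, hz.2⟩))
  have hmemIcc : ∀ x ∈ Ico (0:ℝ) 1, ∀ᶠ z in nhdsWithin x (Ioi x),
      z ∈ Ioc x 1 := fun x hx => Ioc_mem_nhdsGT_of_mem ⟨le_rfl, hx.2⟩
  -- upper bound: log ρ t ≤ log ρ 0 + B t
  have hupper : ∀ x ∈ Icc (0:ℝ) 1, Real.log (ρ x) ≤ Real.log (ρ 0) + B x := by
    refine image_le_of_liminf_slope_right_le_deriv_boundary
      ((hρc.log (fun t ht => (hclr t ht).ne'))) ?_ ?_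
      (fun x _ => ((hB' x).const_add _).hasDerivWithinAt) ?_
    · simp [hBdef]
    · exact continuousOn_const.add (fun x _ => (hB' x).continuousAt.continuousWithinAt)
    · intro x hx r hr
      have hxI : x ∈ Icc (0:ℝ) 1 := ⟨hx.1, hx.2.le⟩
      have hρx : (0:ℝ) < ρ x := hclr x hxI
      rw [hcp_eq x hxI] at hr
      have htendc : Filter.Tendsto (fun z => ‖γ z - γ x‖ / (z - x) / ρ x)
          (nhdsWithin x (Ioi x)) (nhds (c x)) := (htend x hx).div_const _
      have hev : ∀ᶠ z in nhdsWithin x (Ioi x), ‖γ z - γ x‖ / (z - x) / ρ x < r :=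
        htendc.eventually_lt_const hr
      apply Filter.Eventually.frequently
      filter_upwards [hev, hmemIcc x hx] with z hz hzI
      have hzIcc : z ∈ Icc (0:ℝ) 1 := ⟨hx.1.trans hzI.1.le, hzI.2⟩
      have hρz : (0:ℝ) < ρ z := hclr z hzIcc
      have hzx : (0:ℝ) < z - x := sub_pos.2 hzI.1
      rw [slope_def_field, div_lt_iff₀ hzx]
      have key : Real.log (ρ z) - Real.log (ρ x) ≤ ‖γ z - γ x‖ / ρ x := by
        rw [← Real.log_div hρz.ne' hρx.ne']
        refine (Real.log_le_sub_one_of_pos (div_pos hρz hρx)).trans ?_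
        have h1 : ρ z ≤ ρ x + ‖γ z - γ x‖ := by
          have := infDist_le_infDist_add_dist (s := O) (x := γ z) (y := γ x)
          rwa [dist_eq_norm] at this
        rw [div_sub_one hρx.ne', div_le_div_iff₀ hρx hρx]
        nlinarith [norm_nonneg (γ z - γ x)]
      calc Real.log (ρ z) - Real.log (ρ x) ≤ ‖γ z - γ x‖ / ρ x := key
        _ = ‖γ z - γ x‖ / (z - x) / ρ x * (z - x) := by
              have h1 := hzx.ne'; have h2 := hρx.ne'; field_simp
        _ < r * (z - x) := mul_lt_mul_of_pos_right hz hzx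
  -- lower bound: -log ρ t ≤ -log ρ 0 + B t
  have hlower : ∀ x ∈ Icc (0:ℝ) 1, -Real.log (ρ x) ≤ -Real.log (ρ 0) + B x := by
    refine image_le_of_liminf_slope_right_le_deriv_boundary
      ((hρc.log (fun t ht => (hclr t ht).ne')).neg) ?_ ?_
      (fun x _ => ((hB' x).const_add _).hasDerivWithinAt) ?_
    · simp [hBdef]
    · exact continuousOn_const.add (fun x _ => (hB' x).continuousAt.continuousWithinAt)
    · intro x hx r hr
      have hxI : x ∈ Icc (0:ℝ) 1 := ⟨hx.1, hx.2.le⟩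
      have hρx : (0:ℝ) < ρ x := hclr x hxI
      rw [hcp_eq x hxI] at hr
      have htendc : Filter.Tendsto (fun z => ‖γ z - γ x‖ / (z - x) / ρ z)
          (nhdsWithin x (Ioi x)) (nhds (c x)) := by
        have := (htend x hx).div (hρ_tend x hx) hρx.ne'
        exact this
      have hev : ∀ᶠ z in nhdsWithin x (Ioi x), ‖γ z - γ x‖ / (z - x) / ρ z < r :=
        htendc.eventually_lt_const hr
      apply Filter.Eventually.frequently
      filter_upwards [hev, hmemIcc x hx] with z hz hzI
      have hzIcc : z ∈ Icc (0:ℝ) 1 := ⟨hx.1.trans hzI.1.le, hzI.2⟩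
      have hρz : (0:ℝ) < ρ z := hclr z hzIcc
      have hzx : (0:ℝ) < z - x := sub_pos.2 hzI.1
      rw [slope_def_field]
      have key : Real.log (ρ x) - Real.log (ρ z) ≤ ‖γ z - γ x‖ / ρ z := by
        rw [← Real.log_div hρx.ne' hρz.ne']
        refine (Real.log_le_sub_one_of_pos (div_pos hρx hρz)).trans ?_
        have h1 : ρ x ≤ ρ z + ‖γ z - γ x‖ := by
          have := infDist_le_infDist_add_dist (s := O) (x := γ x) (y := γ z)
          rwa [dist_eq_norm, norm_sub_rev] at this
        rw [div_sub_one hρz.ne', div_le_div_iff₀ hρz hρz]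
        nlinarith [norm_nonneg (γ z - γ x)]
      have : (-Real.log (ρ z) - -Real.log (ρ x)) = Real.log (ρ x) - Real.log (ρ z) := by ring
      simp only [Pi.neg_apply]
      rw [this, div_lt_iff₀ hzx]
      calc Real.log (ρ x) - Real.log (ρ z) ≤ ‖γ z - γ x‖ / ρ z := key
        _ < r * (z - x) := by
            calc ‖γ z - γ x‖ / ρ z = ‖γ z - γ x‖ / (z - x) / ρ z * (z - x) := by
                  have h1 := hzx.ne'; have h2 := hρz.ne'; field_simp
              _ < r * (z - x) := mul_lt_mul_of_pos_right hz hzx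
  -- B t₀ ≤ d
  have hBd : B t₀ ≤ d := by
    have h1 : d = ∫ s in (0:ℝ)..1, cp s := by
      rw [hd]
      apply intervalIntegral.integral_congr
      intro t ht
      rw [uIcc_of_le h01] at ht
      exact (hcp_eq t ht).symm
    rw [h1, hBdef]
    apply intervalIntegral.integral_mono_interval le_rfl ht₀.1 ht₀.2
    · exact Filter.Eventually.of_forall hcp_nonneg
    · exact hcpcont.intervalIntegrable 0 1
  have hρ0 : (0:ℝ) < ρ 0 := hclr 0 hmem0
  have hρt : (0:ℝ) < ρ t₀ := hclr t₀ ht₀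
  have hu := hupper t₀ ht₀
  have hl := hlower t₀ ht₀
  constructor
  · -- ρ 0 * exp (-d) ≤ ρ t₀
    have : Real.log (ρ 0) - d ≤ Real.log (ρ t₀) := by linarith
    calc ρ 0 * Real.exp (-d) = Real.exp (Real.log (ρ 0) - d) := by
          rw [Real.exp_sub, Real.exp_log hρ0, Real.exp_neg]; ring
      _ ≤ Real.exp (Real.log (ρ t₀)) := Real.exp_le_exp.2 this
      _ = ρ t₀ := Real.exp_log hρt
  · have : Real.log (ρ t₀) ≤ Real.log (ρ 0) + d := by linarith
    calc ρ t₀ = Real.exp (Real.log (ρ t₀)) := (Real.exp_log hρt).symm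
      _ ≤ Real.exp (Real.log (ρ 0) + d) := Real.exp_le_exp.2 this
      _ = ρ 0 * Real.exp d := by rw [Real.exp_add, Real.exp_log hρ0]
end

section
/- Let γ : [0,1] → ℝ² be a continuously differentiable path with γ(t) ≠ 0 for all t ∈ [0,1]. Then ∫₀¹ ‖γ'(t)‖ / ‖γ(t)‖ dt ≥ angle(γ(0), γ(1)), where angle(u, v) = arccos( ⟨u, v⟩ / (‖u‖·‖v‖) ) is the unsigned angle between the nonzero vectors γ(0) and γ(1). -/
open Real Set MeasureTheory intervalIntegral Topology Filter

lemma primitive_hasDerivWithinAt {g : ℝ → ℂ} (hg : ContinuousOn g (Icc 0 1))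
    {t : ℝ} (ht : t ∈ Icc (0:ℝ) 1) :
    HasDerivWithinAt (fun u => ∫ s in (0:ℝ)..u, g s) (g t) (Icc 0 1) t := by
  have hint : IntervalIntegrable g volume 0 t :=
    (hg.mono (Icc_subset_Icc le_rfl ht.2)).intervalIntegrable_of_Icc ht.1
  have hmeas : StronglyMeasurableAtFilter g (𝓝[Icc (0:ℝ) 1] t) volume :=
    hg.stronglyMeasurableAtFilter_nhdsWithin measurableSet_Icc t
  have hcw : ContinuousWithinAt g (Icc (0:ℝ) 1) t := hg t ht
  rcases eq_or_lt_of_le ht.1 with h0 | h0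
  · -- t = 0
    subst h0
    have hmem : Icc (0:ℝ) 1 ∈ 𝓝[>] (0:ℝ) := by
      rw [mem_nhdsWithin]
      exact ⟨Iio 1, isOpen_Iio, by norm_num,
        fun x hx => ⟨le_of_lt hx.2, le_of_lt hx.1⟩⟩
    have hle : 𝓝[>] (0:ℝ) ≤ 𝓝[Icc (0:ℝ) 1] 0 := nhdsWithin_le_of_mem hmem
    have hmeas' : StronglyMeasurableAtFilter g (𝓝[>] (0:ℝ)) volume :=
      hmeas.filter_mono hle
    have hcw' : Tendsto g (𝓝[>] (0:ℝ)) (𝓝 (g 0)) := hcw.mono_left hle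
    exact (integral_hasDerivWithinAt_of_tendsto_ae_right hint hmeas'
      (hcw'.mono_left inf_le_left)).mono Icc_subset_Ici_self
  rcases eq_or_lt_of_le ht.2 with h1 | h1
  · -- t = 1
    subst h1
    have hmem : Icc (0:ℝ) 1 ∈ 𝓝[≤] (1:ℝ) := by
      rw [mem_nhdsWithin]
      exact ⟨Ioi 0, isOpen_Ioi, by norm_num,
        fun x hx => ⟨le_of_lt hx.1, hx.2⟩⟩
    have hle : 𝓝[≤] (1:ℝ) ≤ 𝓝[Icc (0:ℝ) 1] 1 := nhdsWithin_le_of_mem hmem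
    have hmeas' : StronglyMeasurableAtFilter g (𝓝[≤] (1:ℝ)) volume :=
      hmeas.filter_mono hle
    have hcw' : Tendsto g (𝓝[≤] (1:ℝ)) (𝓝 (g 1)) := hcw.mono_left hle
    exact (integral_hasDerivWithinAt_of_tendsto_ae_right hint hmeas'
      (hcw'.mono_left inf_le_left)).mono Icc_subset_Iic_self
  · -- interior
    have hmem : Icc (0:ℝ) 1 ∈ 𝓝 t := Icc_mem_nhds h0 h1
    have heq : 𝓝[Icc (0:ℝ) 1] t = 𝓝 t := nhdsWithin_eq_nhds.mpr hmem
    have hmeas' : StronglyMeasurableAtFilter g (𝓝 t) volume := heq ▸ hmeas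
    have hca : ContinuousAt g t := by
      have := hcw; unfold ContinuousWithinAt at this; rwa [heq] at this
    exact (integral_hasDerivAt_right hint hmeas' hca).hasDerivWithinAt

lemma abs_arg_exp_le (z : ℂ) : |(Complex.exp z).arg| ≤ |z.im| := by
  have h : Complex.exp z = (Real.exp z.re : ℂ) * Complex.exp (z.im * Complex.I) := by
    rw [Complex.ofReal_exp, ← Complex.exp_add]
    congr 1
    exact (Complex.re_add_im z).symm
  rw [h, Complex.arg_real_mul _ (Real.exp_pos _), Complex.arg_exp_mul_I]
  rcases le_or_gt π |z.im| with hp | hp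
  · have hm := toIocMod_mem_Ioc (mul_pos two_pos Real.pi_pos) (-π) z.im
    have h1 := hm.1
    have h2 := hm.2
    rw [abs_le]
    constructor <;> nlinarith [Real.pi_pos, hp]
  · rw [(toIocMod_eq_self _).mpr]
    rw [abs_lt] at hp
    constructor
    · linarith [hp.1]
    · linarith [hp.2]

lemma key_complex (δ : ℝ → ℂ) (hδ : ContDiffOn ℝ 1 δ (Icc 0 1))
    (h0 : ∀ t ∈ Icc (0:ℝ) 1, δ t ≠ 0) :
    InnerProductGeometry.angle (δ 0) (δ 1) ≤
      ∫ t in (0:ℝ)..1, ‖derivWithin δ (Icc 0 1) t‖ / ‖δ t‖ := by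
  have hud : UniqueDiffOn ℝ (Icc (0:ℝ) 1) := uniqueDiffOn_Icc zero_lt_one
  set δ' := derivWithin δ (Icc 0 1) with hδ'def
  have hδ'c : ContinuousOn δ' (Icc 0 1) := hδ.continuousOn_derivWithin hud le_rfl
  have hδc : ContinuousOn δ (Icc 0 1) := hδ.continuousOn
  set g : ℝ → ℂ := fun t => δ' t / δ t with hgdef
  have hgc : ContinuousOn g (Icc 0 1) := hδ'c.div hδc h0
  set L : ℝ → ℂ := fun u => ∫ s in (0:ℝ)..u, g s with hLdef
  have hLd : ∀ t ∈ Icc (0:ℝ) 1, HasDerivWithinAt L (g t) (Icc 0 1) t :=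
    fun t ht => primitive_hasDerivWithinAt hgc ht
  have hδd : ∀ t ∈ Icc (0:ℝ) 1, HasDerivWithinAt δ (δ' t) (Icc 0 1) t :=
    fun t ht => (hδ.differentiableOn one_ne_zero t ht).hasDerivWithinAt
  have hFd : ∀ t ∈ Icc (0:ℝ) 1,
      HasDerivWithinAt (fun u => δ u * Complex.exp (-L u)) 0 (Icc 0 1) t := by
    intro t ht
    have h1 := (hδd t ht).mul ((hLd t ht).neg.cexp)
    refine h1.congr_deriv ?_
    have hne := h0 t ht
    simp only [hgdef, Pi.neg_apply]
    field_simp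
    ring
  have hFdiff : DifferentiableOn ℝ (fun u => δ u * Complex.exp (-L u)) (Icc 0 1) :=
    fun t ht => (hFd t ht).differentiableWithinAt
  have hF0 : ∀ x ∈ Ico (0:ℝ) 1,
      derivWithin (fun u => δ u * Complex.exp (-L u)) (Icc 0 1) x = 0 := by
    intro x hx
    exact (hFd x (Ico_subset_Icc_self hx)).derivWithin (hud x (Ico_subset_Icc_self hx))
  have hconst := constant_of_derivWithin_zero hFdiff hF0 1 (right_mem_Icc.mpr zero_le_one)
  have hL0 : L 0 = 0 := intervalIntegral.integral_same
  rw [hL0] at hconst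
  simp only [neg_zero, Complex.exp_zero, mul_one] at hconst
  -- δ 1 * exp (-L 1) = δ 0, so δ 0 / δ 1 = exp (-L 1)
  have hexp : δ 0 / δ 1 = Complex.exp (-L 1) := by
    rw [← hconst]
    field_simp [h0 1 (right_mem_Icc.mpr zero_le_one)]
  have hangle : InnerProductGeometry.angle (δ 0) (δ 1) = |(Complex.exp (-L 1)).arg| := by
    rw [Complex.angle_eq_abs_arg (h0 0 (left_mem_Icc.mpr zero_le_one))
      (h0 1 (right_mem_Icc.mpr zero_le_one)), hexp]
  rw [hangle]
  calc |(Complex.exp (-L 1)).arg| ≤ |(-L 1).im| := abs_arg_exp_le _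
    _ = |(L 1).im| := by simp
    _ ≤ ‖L 1‖ := Complex.abs_im_le_norm _
    _ ≤ ∫ s in (0:ℝ)..1, ‖g s‖ :=
        intervalIntegral.norm_integral_le_integral_norm zero_le_one
    _ = ∫ t in (0:ℝ)..1, ‖δ' t‖ / ‖δ t‖ := by
        apply intervalIntegral.integral_congr
        intro s _
        simp [hgdef, norm_div]

/-- Lemma 2.1(ii): the cost of any C¹ path avoiding the point obstacle `0` is at
least the (unsigned) angle between its endpoints as seen from the obstacle. -/
theorem cost_ge_angle (γ : ℝ → EuclideanSpace ℝ (Fin 2))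
    (hγ : ContDiffOn ℝ 1 γ (Icc 0 1))
    (h0 : ∀ t ∈ Icc (0:ℝ) 1, γ t ≠ 0) :
    InnerProductGeometry.angle (γ 0) (γ 1) ≤
      ∫ t in (0:ℝ)..1, ‖derivWithin γ (Icc 0 1) t‖ / ‖γ t‖ := by
  set e : EuclideanSpace ℝ (Fin 2) ≃ₗᵢ[ℝ] ℂ := Complex.orthonormalBasisOneI.repr.symm with hedef
  set δ : ℝ → ℂ := fun t => e (γ t) with hδdef
  have hud : UniqueDiffOn ℝ (Icc (0:ℝ) 1) := uniqueDiffOn_Icc zero_lt_one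
  have hδ : ContDiffOn ℝ 1 δ (Icc 0 1) := e.contDiff.comp_contDiffOn hγ
  have h0' : ∀ t ∈ Icc (0:ℝ) 1, δ t ≠ 0 := by
    intro t ht h
    exact h0 t ht (by simpa using (e.map_eq_zero_iff).mp h)
  have hder : ∀ t ∈ Icc (0:ℝ) 1,
      derivWithin δ (Icc 0 1) t = e (derivWithin γ (Icc 0 1) t) := by
    intro t ht
    have h := (hγ.differentiableOn one_ne_zero t ht).hasDerivWithinAt
    have h2 : HasDerivWithinAt δ (e (derivWithin γ (Icc 0 1) t)) (Icc 0 1) t :=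
      (e.toContinuousLinearEquiv.toContinuousLinearMap.hasFDerivAt).comp_hasDerivWithinAt t h
    exact h2.derivWithin (hud t ht)
  have hangle : InnerProductGeometry.angle (γ 0) (γ 1) =
      InnerProductGeometry.angle (δ 0) (δ 1) := by
    simp only [hδdef]
    exact (e.toLinearIsometry.angle_map (γ 0) (γ 1)).symm
  have hint : (∫ t in (0:ℝ)..1, ‖derivWithin δ (Icc 0 1) t‖ / ‖δ t‖)
      = ∫ t in (0:ℝ)..1, ‖derivWithin γ (Icc 0 1) t‖ / ‖γ t‖ := by
    apply intervalIntegral.integral_congr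
    intro s hs
    rw [uIcc_of_le zero_le_one] at hs
    show ‖derivWithin δ (Icc 0 1) s‖ / ‖δ s‖ = ‖derivWithin γ (Icc 0 1) s‖ / ‖γ s‖
    rw [hder s hs]
    simp [hδdef]
  rw [hangle, ← hint]
  exact key_complex δ hδ h0'
end

section
/- Let r : [0,1] → ℝ and θ : [0,1] → ℝ be continuously differentiable with r(t) > 0 for all t ∈ [0,1], and define γ : [0,1] → ℝ² by γ(t) = (r(t)·cos θ(t), r(t)·sin θ(t)). Then ∫₀¹ ‖γ'(t)‖ / ‖γ(t)‖ dt = ∫₀¹ √( θ'(t)² + (r'(t)/r(t))² ) dt; in other words, the cost of γ with respect to the point obstacle {0} equals the Euclidean arc length of the transformed path t ↦ (θ(t), log r(t)). -/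
open Real Set

/-- The transformed-plane identity behind property (P1): the cost of a path in polar
form `(r, θ)` around the point obstacle `0` equals the Euclidean arc length of the
transformed path `t ↦ (θ t, log (r t))`. -/
theorem polar_cost_eq_transformed_length
    (r θ : ℝ → ℝ)
    (hr : ContDiffOn ℝ 1 r (Icc 0 1)) (hθ : ContDiffOn ℝ 1 θ (Icc 0 1))
    (hrpos : ∀ t ∈ Icc (0:ℝ) 1, 0 < r t)
    (γ : ℝ → EuclideanSpace ℝ (Fin 2))
    (hγ : ∀ t, γ t = ![r t * Real.cos (θ t), r t * Real.sin (θ t)]) :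
    ∫ t in (0:ℝ)..1, ‖derivWithin γ (Icc 0 1) t‖ / ‖γ t‖ =
      ∫ t in (0:ℝ)..1,
        Real.sqrt ((derivWithin θ (Icc 0 1) t) ^ 2 +
          (derivWithin r (Icc 0 1) t / r t) ^ 2) := by
  apply intervalIntegral.integral_congr
  intro t ht
  rw [uIcc_of_le (by norm_num : (0:ℝ) ≤ 1)] at ht
  dsimp only
  have hrt := hrpos t ht
  have hud : UniqueDiffWithinAt ℝ (Icc (0:ℝ) 1) t :=
    (uniqueDiffOn_Icc (by norm_num : (0:ℝ) < 1)) t ht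
  set r' := derivWithin r (Icc (0:ℝ) 1) t with hr'def
  set θ' := derivWithin θ (Icc (0:ℝ) 1) t with hθ'def
  have hrD : HasDerivWithinAt r r' (Icc 0 1) t :=
    (hr.differentiableOn one_ne_zero t ht).hasDerivWithinAt
  have hθD : HasDerivWithinAt θ θ' (Icc 0 1) t :=
    (hθ.differentiableOn one_ne_zero t ht).hasDerivWithinAt
  set a := r' * Real.cos (θ t) + r t * (-Real.sin (θ t) * θ') with hadef
  set b := r' * Real.sin (θ t) + r t * (Real.cos (θ t) * θ') with hbdef
  have h0 : HasDerivWithinAt (fun t => r t * Real.cos (θ t)) a (Icc 0 1) t :=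
    hrD.mul hθD.cos
  have h1 : HasDerivWithinAt (fun t => r t * Real.sin (θ t)) b (Icc 0 1) t :=
    hrD.mul hθD.sin
  -- derivative of the pi-type function
  have hf : HasDerivWithinAt
      (fun t => (![r t * Real.cos (θ t), r t * Real.sin (θ t)] : Fin 2 → ℝ))
      (![a, b]) (Icc 0 1) t := by
    rw [hasDerivWithinAt_pi]
    intro i
    fin_cases i
    · simpa using h0
    · simpa using h1
  have hf1 : HasDerivWithinAt
      (fun t => (![r t * Real.cos (θ t), r t * Real.sin (θ t)] : Fin 2 → ℝ))
      (![a, b]) (Icc 0 1) t := hf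
  -- transfer to EuclideanSpace via the continuous linear equiv
  set e := (EuclideanSpace.equiv (Fin 2) ℝ).symm with hedef
  have hcomp : HasDerivWithinAt (fun x => e
      (![r x * Real.cos (θ x), r x * Real.sin (θ x)] : Fin 2 → ℝ))
      (e (![a, b])) (Icc 0 1) t :=
    e.toContinuousLinearMap.hasFDerivAt.comp_hasDerivWithinAt t hf
  have hγD : HasDerivWithinAt γ (e (![a, b])) (Icc 0 1) t := by
    refine hcomp.congr (fun y _ => ?_) ?_
    · rw [← hγ y]; rfl
    · rw [← hγ t]; rfl
  have hderiv : derivWithin γ (Icc 0 1) t = e (![a, b]) := hγD.derivWithin hud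
  have hsc := Real.sin_sq_add_cos_sq (θ t)
  -- norm of γ t
  have hnγ : ‖γ t‖ = r t := by
    rw [EuclideanSpace.norm_eq, hγ t]
    simp only [Fin.sum_univ_two, Matrix.cons_val_zero, Matrix.cons_val_one, Matrix.head_cons,
      Real.norm_eq_abs, sq_abs]
    rw [show (r t * Real.cos (θ t))^2 + (r t * Real.sin (θ t))^2 = (r t)^2 by nlinarith]
    exact Real.sqrt_sq hrt.le
  -- norm of derivative
  have hnd : ‖derivWithin γ (Icc 0 1) t‖ = Real.sqrt (r' ^ 2 + (r t) ^ 2 * θ' ^ 2) := by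
    rw [hderiv]
    have : ‖e (![a, b])‖ = Real.sqrt (a ^ 2 + b ^ 2) := by
      rw [EuclideanSpace.norm_eq]
      simp only [Fin.sum_univ_two, Real.norm_eq_abs, sq_abs]
      rfl
    rw [this]
    congr 1
    rw [hadef, hbdef]; nlinarith
  rw [hnγ, hnd]
  rw [show θ' ^ 2 + (r' / r t) ^ 2 = (r' ^ 2 + (r t) ^ 2 * θ' ^ 2) / (r t) ^ 2 by
    field_simp; ring]
  rw [Real.sqrt_div (by positivity), Real.sqrt_sq hrt.le]
end

section
/- Let r_s, r_t > 0 and θ_s, θ_t ∈ ℝ. Define the logarithmic spiral γ : [0,1] → ℝ² by γ(t) = exp((1 − t) log r_s + t log r_t) · (cos((1 − t)θ_s + tθ_t), sin((1 − t)θ_s + tθ_t)). Then ∫₀¹ ‖γ'(t)‖ / ‖γ(t)‖ dt = √( (θ_t − θ_s)² + (log r_t − log r_s)² ). -/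
open Real Set

private lemma ls_aux_deriv (c d : ℝ) (t : ℝ) :
    HasDerivAt (fun t : ℝ => (1 - t) * c + t * d) (d - c) t := by
  have h : HasDerivAt (fun t : ℝ => (1 - t) * c + t * d) ((-1) * c + 1 * d) t :=
    (((hasDerivAt_id t).const_sub 1).mul_const c).add ((hasDerivAt_id t).mul_const d)
  simpa [neg_mul, one_mul] using h.congr_deriv (by ring)

/-- Upper-bound half of property (P1), equation (2): the logarithmic spiral from
`r_s e^{iθ_s}` to `r_t e^{iθ_t}` has cost `√((θ_t − θ_s)² + (log r_t − log r_s)²)`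
with respect to the point obstacle `0`. -/
theorem log_spiral_cost (rs rt θs θt : ℝ) (hrs : 0 < rs) (hrt : 0 < rt)
    (γ : ℝ → EuclideanSpace ℝ (Fin 2))
    (hγ : ∀ t, γ t = ![Real.exp ((1 - t) * Real.log rs + t * Real.log rt) *
          Real.cos ((1 - t) * θs + t * θt),
        Real.exp ((1 - t) * Real.log rs + t * Real.log rt) *
          Real.sin ((1 - t) * θs + t * θt)]) :
    ∫ t in (0:ℝ)..1, ‖deriv γ t‖ / ‖γ t‖ =
      Real.sqrt ((θt - θs) ^ 2 + (Real.log rt - Real.log rs) ^ 2) := by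
  set a : ℝ := Real.log rt - Real.log rs with ha
  set b : ℝ := θt - θs with hb
  set ℓ : ℝ → ℝ := fun t => (1 - t) * Real.log rs + t * Real.log rt with hℓdef
  set Θ : ℝ → ℝ := fun t => (1 - t) * θs + t * θt with hΘdef
  set E : ℝ → ℝ := fun t => Real.exp (ℓ t) with hEdef
  have key : ∀ t : ℝ, ‖deriv γ t‖ / ‖γ t‖ = Real.sqrt (b ^ 2 + a ^ 2) := by
    intro t
    have hℓ : HasDerivAt ℓ a t := ls_aux_deriv _ _ t
    have hΘ : HasDerivAt Θ b t := ls_aux_deriv _ _ t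
    have hE : HasDerivAt E (Real.exp (ℓ t) * a) t := hℓ.exp
    have hc : HasDerivAt (fun t => Real.cos (Θ t)) (-Real.sin (Θ t) * b) t := hΘ.cos
    have hs : HasDerivAt (fun t => Real.sin (Θ t)) (Real.cos (Θ t) * b) t := hΘ.sin
    have h0 : HasDerivAt (fun t => E t * Real.cos (Θ t))
        (Real.exp (ℓ t) * a * Real.cos (Θ t) + E t * (-Real.sin (Θ t) * b)) t := hE.mul hc
    have h1 : HasDerivAt (fun t => E t * Real.sin (Θ t))
        (Real.exp (ℓ t) * a * Real.sin (Θ t) + E t * (Real.cos (Θ t) * b)) t := hE.mul hs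
    set v : EuclideanSpace ℝ (Fin 2) := WithLp.toLp 2
      ![Real.exp (ℓ t) * a * Real.cos (Θ t) + E t * (-Real.sin (Θ t) * b),
        Real.exp (ℓ t) * a * Real.sin (Θ t) + E t * (Real.cos (Θ t) * b)] with hv
    have hf : HasDerivAt (fun t : ℝ => (![E t * Real.cos (Θ t), E t * Real.sin (Θ t)] :
        Fin 2 → ℝ)) (fun i => v i) t := by
      rw [hasDerivAt_pi]
      intro i
      fin_cases i
      · simpa [hv] using h0
      · simpa [hv] using h1
    have hγd : HasDerivAt γ v t := by
      have hL : HasDerivAt (fun t : ℝ =>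
          ((EuclideanSpace.equiv (Fin 2) ℝ).symm : (Fin 2 → ℝ) →L[ℝ] EuclideanSpace ℝ (Fin 2))
            (![E t * Real.cos (Θ t), E t * Real.sin (Θ t)] : Fin 2 → ℝ))
          (((EuclideanSpace.equiv (Fin 2) ℝ).symm : (Fin 2 → ℝ) →L[ℝ] EuclideanSpace ℝ (Fin 2))
            (fun i => v i)) t :=
        ((EuclideanSpace.equiv (Fin 2) ℝ).symm :
          (Fin 2 → ℝ) →L[ℝ] EuclideanSpace ℝ (Fin 2)).hasFDerivAt.comp_hasDerivAt t hf
      have heq : γ = fun t : ℝ =>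
          ((EuclideanSpace.equiv (Fin 2) ℝ).symm : (Fin 2 → ℝ) →L[ℝ] EuclideanSpace ℝ (Fin 2))
            (![E t * Real.cos (Θ t), E t * Real.sin (Θ t)] : Fin 2 → ℝ) := by
        funext s
        apply WithLp.ofLp_injective
        rw [hγ s]
        rfl
      have hveq : (((EuclideanSpace.equiv (Fin 2) ℝ).symm :
          (Fin 2 → ℝ) →L[ℝ] EuclideanSpace ℝ (Fin 2)) (fun i => v i)) = v := by
        rfl
      rw [heq]
      rw [hveq] at hL
      exact hL
    have hdγ : deriv γ t = v := hγd.deriv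
    have hEpos : 0 < E t := Real.exp_pos _
    have hnv : ‖v‖ = E t * Real.sqrt (b ^ 2 + a ^ 2) := by
      rw [EuclideanSpace.norm_eq]
      have : ∑ i : Fin 2, ‖v i‖ ^ 2 = (E t) ^ 2 * (b ^ 2 + a ^ 2) := by
        simp only [Fin.sum_univ_two, Real.norm_eq_abs, sq_abs, hv, WithLp.ofLp_toLp]
        simp only [Matrix.cons_val_zero, Matrix.cons_val_one, Matrix.head_cons]
        have hcs := Real.sin_sq_add_cos_sq (Θ t)
        nlinarith [hcs]
      rw [this, Real.sqrt_mul (sq_nonneg _), Real.sqrt_sq hEpos.le]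
    have hnγ : ‖γ t‖ = E t := by
      rw [EuclideanSpace.norm_eq, hγ t]
      have : ∑ i : Fin 2, ‖(![E t * Real.cos (Θ t), E t * Real.sin (Θ t)] :
          Fin 2 → ℝ) i‖ ^ 2 = (E t) ^ 2 := by
        simp only [Fin.sum_univ_two, Real.norm_eq_abs, sq_abs,
          Matrix.cons_val_zero, Matrix.cons_val_one, Matrix.head_cons]
        have hcs := Real.sin_sq_add_cos_sq (Θ t)
        nlinarith [hcs]
      rw [show (∑ i : Fin 2, ‖(![Real.exp ((1 - t) * Real.log rs + t * Real.log rt) *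
            Real.cos ((1 - t) * θs + t * θt),
          Real.exp ((1 - t) * Real.log rs + t * Real.log rt) *
            Real.sin ((1 - t) * θs + t * θt)] : Fin 2 → ℝ) i‖ ^ 2) =
          (E t) ^ 2 from this, Real.sqrt_sq hEpos.le]
    rw [hdγ, hnv, hnγ, mul_comm, mul_div_assoc, div_self hEpos.ne', mul_one]
  rw [intervalIntegral.integral_congr (g := fun _ => Real.sqrt (b ^ 2 + a ^ 2))
    (fun t _ => key t)]
  simp [add_comm]
end

section
/- Let r : [0,1] → ℝ and θ : [0,1] → ℝ be continuously differentiable with r(t) > 0 for all t ∈ [0,1], and define γ : [0,1] → ℝ² by γ(t) = (r(t)·cos θ(t), r(t)·sin θ(t)). Then ∫₀¹ ‖γ'(t)‖ / ‖γ(t)‖ dt ≥ √( (θ(1) − θ(0))² + (log r(1) − log r(0))² ). -/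
open Real Set


private lemma e2_norm (x : EuclideanSpace ℝ (Fin 2)) :
    ‖x‖ = Real.sqrt (x 0 ^ 2 + x 1 ^ 2) := by
  rw [EuclideanSpace.norm_eq]
  simp [Fin.sum_univ_two, sq_abs]

private lemma e2_hasDeriv {f g : ℝ → ℝ} {f' g' t : ℝ} {s : Set ℝ}
    {φ : ℝ → EuclideanSpace ℝ (Fin 2)} {v : EuclideanSpace ℝ (Fin 2)}
    (hφ : ∀ t, φ t = ![f t, g t]) (hv : v = ![f', g'])
    (hf : HasDerivWithinAt f f' s t) (hg : HasDerivWithinAt g g' s t) :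
    HasDerivWithinAt φ v s t := by
  have h0 : HasDerivWithinAt (fun t => (![f t, g t] : Fin 2 → ℝ)) ![f', g'] s t := by
    refine hasDerivWithinAt_pi.2 fun i => ?_
    fin_cases i <;> simpa using (by assumption : _)
  have h1 : HasDerivWithinAt (fun u => (EuclideanSpace.equiv (Fin 2) ℝ).symm (![f u, g u]))
      ((EuclideanSpace.equiv (Fin 2) ℝ).symm ![f', g']) s t :=
    ((EuclideanSpace.equiv (Fin 2) ℝ).symm.toContinuousLinearMap.hasFDerivAt).comp_hasDerivWithinAt t h0
  have hφ' : φ = fun u => (EuclideanSpace.equiv (Fin 2) ℝ).symm (![f u, g u]) := by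
    funext u; rw [← hφ u]; rfl
  have hv' : v = (EuclideanSpace.equiv (Fin 2) ℝ).symm ![f', g'] := by rw [← hv]; rfl
  rw [hφ', hv']
  exact h1

private lemma e2_continuousOn {f g : ℝ → ℝ} {s : Set ℝ}
    {φ : ℝ → EuclideanSpace ℝ (Fin 2)}
    (hφ : ∀ t, φ t = ![f t, g t])
    (hf : ContinuousOn f s) (hg : ContinuousOn g s) :
    ContinuousOn φ s := by
  have h0 : ContinuousOn (fun t => (![f t, g t] : Fin 2 → ℝ)) s := by
    refine continuousOn_pi.2 fun i => ?_
    fin_cases i <;> simpa using (by assumption : _)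
  have h1 : ContinuousOn (fun u => (EuclideanSpace.equiv (Fin 2) ℝ).symm (![f u, g u])) s :=
    (EuclideanSpace.equiv (Fin 2) ℝ).symm.continuous.comp_continuousOn h0
  have hφ' : φ = fun u => (EuclideanSpace.equiv (Fin 2) ℝ).symm (![f u, g u]) := by
    funext u; rw [← hφ u]; rfl
  rw [hφ']; exact h1


/-- Lower-bound half of property (P1), equation (2): no path in polar form between
two points has cost less than that of the logarithmic spiral joining them. -/
theorem polar_cost_ge_spiral_cost
    (r θ : ℝ → ℝ)
    (hr : ContDiffOn ℝ 1 r (Icc 0 1)) (hθ : ContDiffOn ℝ 1 θ (Icc 0 1))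
    (hrpos : ∀ t ∈ Icc (0:ℝ) 1, 0 < r t)
    (γ : ℝ → EuclideanSpace ℝ (Fin 2))
    (hγ : ∀ t, γ t = ![r t * Real.cos (θ t), r t * Real.sin (θ t)]) :
    Real.sqrt ((θ 1 - θ 0) ^ 2 + (Real.log (r 1) - Real.log (r 0)) ^ 2) ≤
      ∫ t in (0:ℝ)..1, ‖derivWithin γ (Icc 0 1) t‖ / ‖γ t‖ := by
  have hUD : UniqueDiffOn ℝ (Icc (0:ℝ) 1) := uniqueDiffOn_Icc one_pos
  set D := Icc (0:ℝ) 1 with hDdef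
  set r' := derivWithin r D with hr'def
  set θ' := derivWithin θ D with hθ'def
  have hrd : ∀ t ∈ D, HasDerivWithinAt r (r' t) D t := fun t ht =>
    ((hr.differentiableOn one_ne_zero) t ht).hasDerivWithinAt
  have hθd : ∀ t ∈ D, HasDerivWithinAt θ (θ' t) D t := fun t ht =>
    ((hθ.differentiableOn one_ne_zero) t ht).hasDerivWithinAt
  have hr'c : ContinuousOn r' D := hr.continuousOn_derivWithin hUD le_rfl
  have hθ'c : ContinuousOn θ' D := hθ.continuousOn_derivWithin hUD le_rfl
  set g : ℝ → EuclideanSpace ℝ (Fin 2) := fun t => WithLp.toLp 2 ![θ t, Real.log (r t)] with hgdef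
  set w : ℝ → EuclideanSpace ℝ (Fin 2) := fun t => WithLp.toLp 2 ![θ' t, r' t / r t] with hwdef
  -- derivative of g
  have hgd : ∀ t ∈ D, HasDerivWithinAt g (w t) D t := by
    intro t ht
    refine e2_hasDeriv (fun u => rfl) rfl (hθd t ht) ?_
    have h := (Real.hasDerivAt_log (hrpos t ht).ne').comp_hasDerivWithinAt t (hrd t ht)
    simpa [Function.comp_def, div_eq_inv_mul] using h
  -- continuity of w
  have hwc : ContinuousOn w D :=
    e2_continuousOn (fun u => rfl) hθ'c
      (hr'c.div hr.continuousOn fun t ht => (hrpos t ht).ne')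
  have hwint : IntervalIntegrable w MeasureTheory.volume 0 1 := by
    apply ContinuousOn.intervalIntegrable
    rwa [uIcc_of_le zero_le_one]
  have hgc : ContinuousOn g D :=
    e2_continuousOn (fun u => rfl) hθ.continuousOn
      (hr.continuousOn.log fun t ht => (hrpos t ht).ne')
  -- FTC
  have key : ∫ t in (0:ℝ)..1, w t = g 1 - g 0 := by
    apply intervalIntegral.integral_eq_sub_of_hasDeriv_right_of_le zero_le_one hgc _ hwint
    intro x hx
    exact ((hgd x (Ioo_subset_Icc_self hx)).hasDerivAt
      (Icc_mem_nhds hx.1 hx.2)).hasDerivWithinAt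
  have h1 : ‖g 1 - g 0‖ ≤ ∫ t in (0:ℝ)..1, ‖w t‖ := by
    rw [← key]
    exact intervalIntegral.norm_integral_le_integral_norm zero_le_one
  -- LHS = ‖g 1 - g 0‖
  have hdiff : g 1 - g 0 = (WithLp.toLp 2 ![θ 1 - θ 0, Real.log (r 1) - Real.log (r 0)] :
      EuclideanSpace ℝ (Fin 2)) := by
    ext i
    fin_cases i <;> simp [hgdef]
  have hLHS : Real.sqrt ((θ 1 - θ 0) ^ 2 + (Real.log (r 1) - Real.log (r 0)) ^ 2)
      = ‖g 1 - g 0‖ := by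
    rw [hdiff, e2_norm]
    simp
  -- pointwise equality of integrands
  have hpt : ∀ t ∈ D, ‖w t‖ = ‖derivWithin γ D t‖ / ‖γ t‖ := by
    intro t ht
    have hrt := hrpos t ht
    -- derivative of γ
    have hγ1 : HasDerivWithinAt (fun u => r u * Real.cos (θ u))
        (r' t * Real.cos (θ t) + r t * (-Real.sin (θ t) * θ' t)) D t :=
      (hrd t ht).mul ((Real.hasDerivAt_cos (θ t)).comp_hasDerivWithinAt t (hθd t ht))
    have hγ2 : HasDerivWithinAt (fun u => r u * Real.sin (θ u))
        (r' t * Real.sin (θ t) + r t * (Real.cos (θ t) * θ' t)) D t :=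
      (hrd t ht).mul ((Real.hasDerivAt_sin (θ t)).comp_hasDerivWithinAt t (hθd t ht))
    have hγd : HasDerivWithinAt γ
        (WithLp.toLp 2 ![r' t * Real.cos (θ t) + r t * (-Real.sin (θ t) * θ' t),
           r' t * Real.sin (θ t) + r t * (Real.cos (θ t) * θ' t)]) D t :=
      e2_hasDeriv hγ rfl hγ1 hγ2
    have hdγ := hγd.derivWithin (hUD t ht)
    -- norms
    have hnγ : ‖γ t‖ = r t := by
      rw [e2_norm, hγ t]
      simp only [Matrix.cons_val_zero, Matrix.cons_val_one, Matrix.head_cons]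
      have : (r t * Real.cos (θ t)) ^ 2 + (r t * Real.sin (θ t)) ^ 2 = r t ^ 2 := by
        linear_combination r t ^ 2 * Real.sin_sq_add_cos_sq (θ t)
      rw [this, Real.sqrt_sq hrt.le]
    have hnd : ‖derivWithin γ D t‖ = Real.sqrt (r' t ^ 2 + r t ^ 2 * θ' t ^ 2) := by
      rw [hdγ, e2_norm]
      simp only [WithLp.ofLp_toLp, Matrix.cons_val_zero, Matrix.cons_val_one, Matrix.head_cons]
      congr 1
      linear_combination (r' t ^ 2 + r t ^ 2 * θ' t ^ 2) * Real.sin_sq_add_cos_sq (θ t)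
    have hnw : ‖w t‖ = Real.sqrt (r' t ^ 2 + r t ^ 2 * θ' t ^ 2) / r t := by
      rw [e2_norm]
      simp only [hwdef, WithLp.ofLp_toLp, Matrix.cons_val_zero, Matrix.cons_val_one, Matrix.head_cons]
      have h2 : θ' t ^ 2 + (r' t / r t) ^ 2 = (r' t ^ 2 + r t ^ 2 * θ' t ^ 2) / r t ^ 2 := by
        field_simp
        ring
      rw [h2, Real.sqrt_div (by positivity), Real.sqrt_sq hrt.le]
    rw [hnw, hnd, hnγ]
  have h2 : (∫ t in (0:ℝ)..1, ‖w t‖)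
      = ∫ t in (0:ℝ)..1, ‖derivWithin γ D t‖ / ‖γ t‖ := by
    apply intervalIntegral.integral_congr
    intro t ht
    rw [uIcc_of_le zero_le_one] at ht
    exact hpt t ht
  rw [hLHS]
  exact h1.trans_eq h2
end

section
/- Let r > 0 and 0 < θ_s ≤ θ_t < π. Define the circular arc γ : [0,1] → ℝ² by γ(t) = r · (cos((1 − t)θ_s + tθ_t), sin((1 − t)θ_s + tθ_t)), so that the second coordinate γ₂(t) > 0 for all t (γ₂(x) is the clearance of γ(t) from the line obstacle ℝ × {0}). Then ∫₀¹ ‖γ'(t)‖ / γ₂(t) dt = log( tan(θ_t / 2) ) − log( tan(θ_s / 2) ). -/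
open Real Set

private lemma logtan_hasDeriv (θ : ℝ) (h0 : 0 < θ) (h1 : θ < π) :
    HasDerivAt (fun x => Real.log (Real.tan (x/2))) (1 / Real.sin θ) θ := by
  have hc : Real.cos (θ/2) ≠ 0 := by
    apply ne_of_gt
    apply Real.cos_pos_of_mem_Ioo
    constructor <;> nlinarith [Real.pi_pos]
  have hs : 0 < Real.sin (θ/2) := by
    apply Real.sin_pos_of_pos_of_lt_pi <;> nlinarith [Real.pi_pos]
  have htan : Real.tan (θ/2) ≠ 0 := by
    rw [Real.tan_eq_sin_div_cos]; positivity
  have h1' : HasDerivAt (fun x : ℝ => x/2) (1/2) θ := by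
    simpa using (hasDerivAt_id θ).div_const 2
  have h2' : HasDerivAt (fun x => Real.tan (x/2)) (1 / Real.cos (θ/2) ^ 2 * (1/2)) θ :=
    (Real.hasDerivAt_tan hc).comp θ h1' (h₂ := Real.tan)
  have h3' := (Real.hasDerivAt_log htan).comp θ h2'
  refine h3'.congr_deriv ?_
  have hd : Real.sin θ = 2 * Real.sin (θ/2) * Real.cos (θ/2) := by
    rw [← Real.sin_two_mul]; ring_nf
  rw [Real.tan_eq_sin_div_cos, hd]
  field_simp

/-- Property (P2), equation (3): a circular arc of radius `r` centered at a point of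
the line obstacle `ℝ × {0}`, spanning angles `θ_s` to `θ_t`, has cost
`log tan(θ_t/2) − log tan(θ_s/2)`. -/
theorem arc_cost_line_obstacle (r θs θt : ℝ) (hr : 0 < r)
    (h1 : 0 < θs) (h2 : θs ≤ θt) (h3 : θt < π)
    (γ : ℝ → EuclideanSpace ℝ (Fin 2))
    (hγ : ∀ t, γ t = ![r * Real.cos ((1 - t) * θs + t * θt),
        r * Real.sin ((1 - t) * θs + t * θt)])
    (hpos : ∀ t ∈ Icc (0:ℝ) 1, 0 < γ t 1) :
    ∫ t in (0:ℝ)..1, ‖deriv γ t‖ / γ t 1 =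
      Real.log (Real.tan (θt / 2)) - Real.log (Real.tan (θs / 2)) := by
  set θ := fun t : ℝ => (1 - t) * θs + t * θt with hθdef
  set d := θt - θs with hd
  have hd0 : 0 ≤ d := by simp [hd]; linarith
  -- range of θ on [0,1]
  have hrange : ∀ t ∈ Icc (0:ℝ) 1, θs ≤ θ t ∧ θ t ≤ θt := by
    intro t ht
    obtain ⟨ht0, ht1⟩ := ht
    constructor <;> simp only [hθdef] <;> nlinarith
  have hsinpos : ∀ t ∈ Icc (0:ℝ) 1, 0 < Real.sin (θ t) := by
    intro t ht
    obtain ⟨ha, hb⟩ := hrange t ht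
    exact Real.sin_pos_of_pos_of_lt_pi (lt_of_lt_of_le h1 ha) (lt_of_le_of_lt hb h3)
  -- derivative of θ
  have hθ' : ∀ t : ℝ, HasDerivAt θ d t := by
    intro t
    have : HasDerivAt θ ((-1) * θs + 1 * θt) t := by
      apply HasDerivAt.add
      · exact (((hasDerivAt_id t).const_sub 1).mul_const θs)
      · exact ((hasDerivAt_id t).mul_const θt)
    convert this using 1; simp [hd]; ring
  -- derivative of γ
  set v := fun t : ℝ => (EuclideanSpace.equiv (Fin 2) ℝ).symm
      ![r * (-Real.sin (θ t)) * d, r * Real.cos (θ t) * d] with hv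
  have hγ' : ∀ t : ℝ, HasDerivAt γ (v t) t := by
    intro t
    have hg : HasDerivAt (fun t => (![r * Real.cos (θ t), r * Real.sin (θ t)] : Fin 2 → ℝ))
        ![r * (-Real.sin (θ t)) * d, r * Real.cos (θ t) * d] t := by
      rw [hasDerivAt_pi]
      intro i
      fin_cases i
      · have := ((Real.hasDerivAt_cos (θ t)).comp t (hθ' t)).const_mul r
        refine this.congr_deriv ?_
        simp; ring
      · have := ((Real.hasDerivAt_sin (θ t)).comp t (hθ' t)).const_mul r
        refine this.congr_deriv ?_
        simp; ring
    have := ((EuclideanSpace.equiv (Fin 2) ℝ).symm.toContinuousLinearMap.hasFDerivAt.comp_hasDerivAt t hg)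
    refine this.congr_of_eventuallyEq (Filter.Eventually.of_forall fun s => ?_)
    apply WithLp.ofLp_injective
    rw [hγ s]
    rfl
  have hderiv : ∀ t : ℝ, deriv γ t = v t := fun t => (hγ' t).deriv
  -- norm of v
  have hnorm : ∀ t : ℝ, ‖v t‖ = r * d := by
    intro t
    have h1 : ‖v t‖ = Real.sqrt ((r * (-Real.sin (θ t)) * d)^2 + (r * Real.cos (θ t) * d)^2) := by
      rw [hv, EuclideanSpace.norm_eq]
      congr 1
      rw [Fin.sum_univ_two]
      norm_num [Real.norm_eq_abs, sq_abs]
      simp [mul_pow, sq_abs]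
    rw [h1]
    have : (r * (-Real.sin (θ t)) * d)^2 + (r * Real.cos (θ t) * d)^2 = (r*d)^2 := by
      nlinarith [Real.sin_sq_add_cos_sq (θ t)]
    rw [this, Real.sqrt_sq (by positivity)]
  -- γ t 1
  have hγ1 : ∀ t : ℝ, γ t 1 = r * Real.sin (θ t) := by
    intro t
    rw [hγ t]
    rfl
  -- integrand value
  have hval : ∀ t ∈ Icc (0:ℝ) 1, ‖deriv γ t‖ / γ t 1 = 1 / Real.sin (θ t) * d := by
    intro t ht
    rw [hderiv t, hnorm t, hγ1 t]
    have hs := hsinpos t ht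
    field_simp
  -- antiderivative
  set F := fun t : ℝ => Real.log (Real.tan (θ t / 2)) with hF
  have hFderiv : ∀ t ∈ uIcc (0:ℝ) 1, HasDerivAt F (‖deriv γ t‖ / γ t 1) t := by
    intro t ht
    rw [uIcc_of_le (by norm_num : (0:ℝ) ≤ 1)] at ht
    obtain ⟨ha, hb⟩ := hrange t ht
    have h := (logtan_hasDeriv (θ t) (lt_of_lt_of_le h1 ha) (lt_of_le_of_lt hb h3)).comp t (hθ' t)
    rw [hval t ht]
    exact h
  -- integrability
  have hint : IntervalIntegrable (fun t => ‖deriv γ t‖ / γ t 1) MeasureTheory.volume 0 1 := by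
    apply ContinuousOn.intervalIntegrable
    rw [uIcc_of_le (by norm_num : (0:ℝ) ≤ 1)]
    have hcong : ∀ t ∈ Icc (0:ℝ) 1, (fun t => (r * d) / (r * Real.sin (θ t))) t
        = ‖deriv γ t‖ / γ t 1 := by
      intro t ht
      rw [hderiv t, hnorm t, hγ1 t]
    apply ContinuousOn.congr _ fun t ht => (hcong t ht).symm
    apply ContinuousOn.div continuousOn_const
    · exact (continuous_const.mul (Real.continuous_sin.comp (by fun_prop))).continuousOn
    · intro t ht
      have := hsinpos t ht
      positivity
  rw [intervalIntegral.integral_eq_sub_of_hasDerivAt hFderiv hint]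
  have e1 : θ 1 = θt := by simp [hθdef]
  have e0 : θ 0 = θs := by simp [hθdef]
  rw [hF]
  simp only [e1, e0]
end

section
/- Let γ : [0,1] → ℂ be a continuously differentiable path with Im(γ(t)) > 0 for all t ∈ [0,1], and let p and q be points of the upper half-plane (with its standard hyperbolic metric) whose underlying complex numbers are γ(0) and γ(1) respectively. Then ∫₀¹ ‖γ'(t)‖ / Im(γ(t)) dt ≥ dist(p, q), the hyperbolic distance between p and q. -/
open Real Set

/-- Optimality claim of property (P2): the cost of a path in the open upper
half-plane is at least the hyperbolic distance between its endpoints. -/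
theorem cost_ge_hyperbolic_dist (γ : ℝ → ℂ)
    (hγ : ContDiffOn ℝ 1 γ (Icc 0 1))
    (him : ∀ t ∈ Icc (0:ℝ) 1, 0 < (γ t).im)
    (p q : UpperHalfPlane) (hp : (p : ℂ) = γ 0) (hq : (q : ℂ) = γ 1) :
    dist p q ≤ ∫ t in (0:ℝ)..1, ‖derivWithin γ (Icc 0 1) t‖ / (γ t).im := by
  have hγc : ContinuousOn γ (Icc 0 1) := hγ.continuousOn
  set g : ℝ → ℝ := fun t => ‖derivWithin γ (Icc 0 1) t‖ / (γ t).im with hg_def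
  have hgc : ContinuousOn g (Icc 0 1) := by
    apply ContinuousOn.div
    · exact (hγ.continuousOn_derivWithin (uniqueDiffOn_Icc one_pos) le_rfl).norm
    · exact Complex.continuous_im.comp_continuousOn hγc
    · exact fun t ht => (him t ht).ne'
  -- continuous extension of the integrand to all of ℝ
  set ρ : ℝ → ℝ := fun t => max 0 (min 1 t) with hρ_def
  have hρc : Continuous ρ := continuous_const.max (continuous_const.min continuous_id)
  have hρmem : ∀ t, ρ t ∈ Icc (0:ℝ) 1 :=
    fun t => ⟨le_max_left _ _, max_le zero_le_one (min_le_left _ _)⟩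
  have hρeq : ∀ t ∈ Icc (0:ℝ) 1, ρ t = t := fun t ht => by
    simp [hρ_def, min_eq_right ht.2, max_eq_right ht.1]
  set G : ℝ → ℝ := fun t => g (ρ t) with hG_def
  have hGc : Continuous G := hgc.comp_continuous hρc hρmem
  have hGg : ∀ t ∈ Icc (0:ℝ) 1, G t = g t := fun t ht => by rw [hG_def]; simp [hρeq t ht]
  set B : ℝ → ℝ := fun u => ∫ s in (0:ℝ)..u, G s with hB_def
  have hB' : ∀ x, HasDerivAt B (G x) x := fun x =>
    intervalIntegral.integral_hasDerivAt_right (hGc.intervalIntegrable _ _)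
      hGc.aestronglyMeasurable.stronglyMeasurableAtFilter hGc.continuousAt
  -- the endpoint function into the upper half-plane
  set pt : ℝ → UpperHalfPlane := fun x =>
    if h : 0 < (γ x).im then (⟨γ x, h⟩ : UpperHalfPlane) else p with hpt_def
  have hptγ : ∀ x ∈ Icc (0:ℝ) 1, (pt x : ℂ) = γ x := fun x hx => by
    simp [hpt_def, dif_pos (him x hx)]
  have hptim : ∀ x ∈ Icc (0:ℝ) 1, (pt x).im = (γ x).im := fun x hx => by
    rw [← UpperHalfPlane.coe_im, hptγ x hx]
  set F : ℝ → ℝ := fun x => dist p (pt x) with hF_def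
  have hFc : ContinuousOn F (Icc 0 1) := by
    have : ContinuousOn (fun x => 2 * arsinh (dist (p : ℂ) (γ x) / (2 * √(p.im * (γ x).im))))
        (Icc 0 1) := by
      apply continuousOn_const.mul
      apply Real.continuous_arsinh.comp_continuousOn
      apply ContinuousOn.div
      · exact (continuous_const.dist continuous_id).comp_continuousOn hγc
      · exact (continuous_const.mul (continuous_sqrt.comp (continuous_const.mul
          Complex.continuous_im))).comp_continuousOn hγc
      · intro x hx
        have h1 : 0 < p.im * (γ x).im := mul_pos p.im_pos (him x hx)
        positivity
    refine this.congr fun x hx => ?_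
    show dist p (pt x) = _
    rw [UpperHalfPlane.dist_eq, hptγ x hx, hptim x hx]
  -- key slope estimate
  have hslope : ∀ x ∈ Ico (0:ℝ) 1, ∀ r, G x < r →
      ∃ᶠ z in nhdsWithin x (Ioi x), slope F x z < r := by
    intro x hx r hr
    have hx' : x ∈ Icc (0:ℝ) 1 := ⟨hx.1, hx.2.le⟩
    rw [hGg x hx'] at hr
    set d : ℂ := derivWithin γ (Icc 0 1) x with hd_def
    have hder : HasDerivWithinAt γ d (Icc 0 1) x :=
      ((hγ.differentiableOn one_ne_zero) x hx').hasDerivWithinAt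
    -- slope of γ tends to d along 𝓝[>] x
    have hIoc : nhdsWithin x (Ioc x 1) = nhdsWithin x (Ioi x) :=
      nhdsWithin_Ioc_eq_nhdsGT hx.2
    have hsub : Ioc x 1 ⊆ Icc (0:ℝ) 1 \ {x} := fun z hz =>
      ⟨⟨hx.1.trans hz.1.le, hz.2⟩, ne_of_gt hz.1⟩
    have hle : nhdsWithin x (Ioi x) ≤ nhdsWithin x (Icc (0:ℝ) 1 \ {x}) := by
      rw [← hIoc]; exact nhdsWithin_mono x hsub
    have hslopeγ : Filter.Tendsto (slope γ x) (nhdsWithin x (Ioi x)) (nhds d) :=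
      (hasDerivWithinAt_iff_tendsto_slope.1 hder).mono_left hle
    have hγx : Filter.Tendsto γ (nhdsWithin x (Ioi x)) (nhds (γ x)) := by
      refine Filter.Tendsto.mono_left ?_ (hle.trans (nhdsWithin_mono x diff_subset))
      exact (hγc x hx').tendsto
    -- the comparison function tends to g x
    have htend : Filter.Tendsto (fun z => ‖slope γ x z‖ / √((γ x).im * (γ z).im))
        (nhdsWithin x (Ioi x)) (nhds (g x)) := by
      have h1 : Filter.Tendsto (fun z => √((γ x).im * (γ z).im)) (nhdsWithin x (Ioi x))
          (nhds (γ x).im) := by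
        have : Filter.Tendsto (fun z => √((γ x).im * (γ z).im)) (nhdsWithin x (Ioi x))
            (nhds (√((γ x).im * (γ x).im))) :=
          (Real.continuous_sqrt.tendsto _).comp
            (tendsto_const_nhds.mul ((Complex.continuous_im.tendsto _).comp hγx))
        rwa [Real.sqrt_mul_self (him x hx').le] at this
      have h2 : Filter.Tendsto (fun z => ‖slope γ x z‖) (nhdsWithin x (Ioi x)) (nhds ‖d‖) :=
        (continuous_norm.tendsto _).comp hslopeγ
      simpa [hg_def, ← hd_def, Pi.div_def] using h2.div h1 (him x hx').ne'
    have hev : ∀ᶠ z in nhdsWithin x (Ioi x),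
        ‖slope γ x z‖ / √((γ x).im * (γ z).im) < r := htend.eventually_lt_const hr
    have hmem : Ioc x 1 ∈ nhdsWithin x (Ioi x) := by
      rw [← hIoc]; exact self_mem_nhdsWithin
    refine ((hev.and (Filter.eventually_of_mem hmem fun z hz => hz)).mono ?_).frequently
    rintro z ⟨hzr, hz⟩
    have hz' : z ∈ Icc (0:ℝ) 1 := ⟨hx.1.trans hz.1.le, hz.2⟩
    have hzx : 0 < z - x := sub_pos.2 hz.1
    -- slope F x z ≤ dist (pt x) (pt z) / (z - x) ≤ the comparison function
    have tri : F z - F x ≤ dist (pt x) (pt z) := by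
      show dist p (pt z) - dist p (pt x) ≤ _
      linarith [dist_triangle p (pt x) (pt z)]
    have key : dist (pt x) (pt z) ≤ dist (γ x) (γ z) / √((γ x).im * (γ z).im) := by
      have := UpperHalfPlane.dist_le_dist_coe_div_sqrt (pt x) (pt z)
      rwa [hptγ x hx', hptγ z hz', hptim x hx', hptim z hz'] at this
    calc slope F x z = (F z - F x) / (z - x) := slope_def_field F x z
      _ ≤ dist (γ x) (γ z) / √((γ x).im * (γ z).im) / (z - x) :=
          by gcongr; exact tri.trans key
      _ = ‖slope γ x z‖ / √((γ x).im * (γ z).im) := by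
          rw [slope_def_module, norm_smul, norm_inv, Real.norm_eq_abs, abs_of_pos hzx,
            dist_eq_norm, norm_sub_rev (γ x), div_right_comm, inv_mul_eq_div]
      _ < r := hzr
  -- fencing theorem
  have main : ∀ ⦃x⦄, x ∈ Icc (0:ℝ) 1 → F x ≤ B x := by
    refine image_le_of_liminf_slope_right_le_deriv_boundary hFc ?_ (fun x _ =>
      (hB' x).continuousAt.continuousWithinAt) (fun x _ => (hB' x).hasDerivWithinAt) hslope
    have hpt0 : pt 0 = p := by
      apply UpperHalfPlane.ext
      rw [hptγ 0 (left_mem_Icc.2 zero_le_one), ← hp]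
    show dist p (pt 0) ≤ ∫ s in (0:ℝ)..0, G s
    rw [hpt0, dist_self, intervalIntegral.integral_same]
  have hF1 : F 1 = dist p q := by
    have hpt1 : pt 1 = q := by
      apply UpperHalfPlane.ext
      rw [hptγ 1 (right_mem_Icc.2 zero_le_one), ← hq]
    show dist p (pt 1) = dist p q
    rw [hpt1]
  have hB1 : B 1 = ∫ t in (0:ℝ)..1, g t := by
    apply intervalIntegral.integral_congr
    intro t ht
    exact hGg t (by rwa [uIcc_of_le zero_le_one] at ht)
  have := main (right_mem_Icc.2 zero_le_one)
  rwa [hF1, hB1] at this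
end
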